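/- arXiv:1904.10437 — 2 statements merged into one kernel-verified Lean document; each statement's English description precedes it below -/
import Mathlib

section
/- For a Hermitian matrix X and a positive definite matrix σ on a finite-dimensional Hilbert space, and any α ≥ 1, the trace norm of X satisfies ‖X‖₁ ≤ ‖σ^{(1-α)/(2α)} X σ^{(1-α)/(2α)}‖_α · (Tr σ)^{(α-1)/α}, where ‖·‖_p denotes the Schatten p-norm. -/
open scoped Classical
open Matrix ComplexOrder

noncomputable section

variable {n : Type*} [Fintype n] [DecidableEq n]

/-- Real power of a (Hermitian) matrix via the continuous functional calculus. -/
noncomputable def mpow (A : Matrix n n ℂ) (r : ℝ) : Matrix n n ℂ :=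
  cfc (fun x : ℝ => x ^ r) A

/-- Schatten `p`-norm `(Tr[(Y†Y)^(p/2)])^(1/p)`. -/
noncomputable def schattenNorm (p : ℝ) (Y : Matrix n n ℂ) : ℝ :=
  ((mpow (Yᴴ * Y) (p / 2)).trace).re ^ (1 / p)

/-- `μ_α(X‖σ) = ‖σ^{(1-α)/(2α)} X σ^{(1-α)/(2α)}‖_α`. -/
noncomputable def muAlpha (α : ℝ) (X σ : Matrix n n ℂ) : ℝ :=
  schattenNorm α (mpow σ ((1 - α) / (2 * α)) * X * mpow σ ((1 - α) / (2 * α)))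


private lemma continuousOn_of_finite {s : Set ℝ} (hs : s.Finite) (f : ℝ → ℝ) :
    ContinuousOn f s := by
  have : Finite s := hs.to_subtype
  rw [continuousOn_iff_continuous_restrict]
  exact continuous_of_discreteTopology

private lemma contOn (f : ℝ → ℝ) (A : Matrix n n ℂ) : ContinuousOn f (spectrum ℝ A) :=
  continuousOn_of_finite (Matrix.finite_real_spectrum (A := A)) f

private lemma contOn_img (g : ℝ → ℝ) (A : Matrix n n ℂ) (f : ℝ → ℝ) :
    ContinuousOn g (f '' spectrum ℝ A) :=
  continuousOn_of_finite ((Matrix.finite_real_spectrum (A := A)).image f) g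

private lemma trace_conj_unitary (U : Matrix.unitaryGroup n ℂ) (M : Matrix n n ℂ) :
    ((U : Matrix n n ℂ) * M * star (U : Matrix n n ℂ)).trace = M.trace := by
  rw [Matrix.trace_mul_cycle]
  simp only [SetLike.coe_mem, Unitary.star_mul_self_of_mem, one_mul]

private lemma trace_cfc' {A : Matrix n n ℂ} (hA : A.IsHermitian) (f : ℝ → ℝ) :
    (cfc f A).trace = ∑ i, (f (hA.eigenvalues i) : ℂ) := by
  rw [hA.cfc_eq, Matrix.IsHermitian.cfc, Unitary.conjStarAlgAut_apply, trace_conj_unitary, Matrix.trace_diagonal]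
  rfl

private lemma trace_eq_sum_eig {A : Matrix n n ℂ} (hA : A.IsHermitian) :
    A.trace = ∑ i, (hA.eigenvalues i : ℂ) := by
  conv_lhs => rw [← cfc_id ℝ A hA]
  exact trace_cfc' hA _

private lemma posSemidef_cfc {A : Matrix n n ℂ} (hA : A.IsHermitian) (f : ℝ → ℝ)
    (hf : ∀ x ∈ spectrum ℝ A, 0 ≤ f x) : (cfc f A).PosSemidef := by
  rw [hA.cfc_eq, Matrix.IsHermitian.cfc]
  have hd : (Matrix.diagonal (RCLike.ofReal ∘ f ∘ hA.eigenvalues) : Matrix n n ℂ).PosSemidef := by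
    refine Matrix.posSemidef_diagonal_iff.mpr fun i => ?_
    have := hf _ (hA.eigenvalues_mem_spectrum_real i)
    simpa [Complex.zero_le_real] using this
  simpa [Matrix.star_eq_conjTranspose] using
    hd.mul_mul_conjTranspose_same (hA.eigenvectorUnitary : Matrix n n ℂ)

private lemma re_trace_nonneg {A : Matrix n n ℂ} (hA : A.PosSemidef) : 0 ≤ A.trace.re := by
  rw [trace_eq_sum_eig hA.1]
  simp only [Complex.re_sum, Complex.ofReal_re]
  exact Finset.sum_nonneg fun i _ => hA.eigenvalues_nonneg i

private lemma re_trace_mul_nonneg {A B : Matrix n n ℂ} (hA : A.PosSemidef) (hB : B.PosSemidef) :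
    0 ≤ (A * B).trace.re := by
  set R := cfc Real.sqrt A with hR
  have hRpsd : R.PosSemidef := posSemidef_cfc hA.1 _ fun x _ => Real.sqrt_nonneg x
  have hRR : R * R = A := by
    rw [hR, ← cfc_mul _ _ A (contOn _ A) (contOn _ A)]
    conv_rhs => rw [← cfc_id' ℝ A hA.1]
    refine cfc_congr fun x hx => ?_
    obtain ⟨i, rfl⟩ := hA.1.spectrum_real_eq_range_eigenvalues ▸ hx
    exact Real.mul_self_sqrt (hA.eigenvalues_nonneg i)
  have h2 : (A * B).trace = (Rᴴ * B * R).trace := by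
    conv_lhs => rw [← hRR]
    rw [hRpsd.1.eq, Matrix.mul_assoc, Matrix.trace_mul_comm,
      Matrix.mul_assoc]
  rw [h2]
  exact re_trace_nonneg (hB.conjTranspose_mul_mul_same R)

private lemma re_trace_abs_le {X P Q : Matrix n n ℂ} (hX : X.IsHermitian)
    (hP : P.PosSemidef) (hQ : Q.PosSemidef) (hXPQ : X = P - Q) :
    (cfc (fun x : ℝ => |x|) X).trace.re ≤ P.trace.re + Q.trace.re := by
  have hXsa : IsSelfAdjoint X := hX
  set fp : ℝ → ℝ := fun x => if 0 < x then 1 else 0 with hfp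
  set fm : ℝ → ℝ := fun x => if x < 0 then 1 else 0 with hfm
  have habs : cfc (fun x : ℝ => |x|) X = cfc fp X * X - cfc fm X * X := by
    have h1 : cfc (fun x : ℝ => fp x * x) X = cfc fp X * X := by
      rw [cfc_mul fp (fun x : ℝ => x) X (contOn _ X) (contOn _ X), cfc_id' ℝ X hXsa]
    have h2 : cfc (fun x : ℝ => fm x * x) X = cfc fm X * X := by
      rw [cfc_mul fm (fun x : ℝ => x) X (contOn _ X) (contOn _ X), cfc_id' ℝ X hXsa]
    rw [← h1, ← h2, ← cfc_sub _ _ X (contOn _ X) (contOn _ X)]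
    congr 1
    funext x
    rcases lt_trichotomy x 0 with h | h | h
    · simp [hfp, hfm, h, not_lt.mpr h.le, abs_of_neg h]
    · simp [h, hfp, hfm]
    · simp [hfp, hfm, h, not_lt.mpr h.le, abs_of_pos h]
  have hfp_psd : (cfc fp X).PosSemidef := posSemidef_cfc hX _ (by
    intro x _; by_cases h : 0 < x <;> simp [hfp, h])
  have hfm_psd : (cfc fm X).PosSemidef := posSemidef_cfc hX _ (by
    intro x _; by_cases h : x < 0 <;> simp [hfm, h])
  have hfp1_psd : (1 - cfc fp X).PosSemidef := by
    have heq : cfc (fun x : ℝ => 1 - fp x) X = 1 - cfc fp X := by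
      rw [cfc_sub _ _ X (contOn _ X) (contOn _ X), cfc_const_one ℝ X hXsa]
    rw [← heq]
    refine posSemidef_cfc hX _ fun x _ => ?_
    by_cases h : 0 < x <;> simp [hfp, h]
  have hfm1_psd : (1 - cfc fm X).PosSemidef := by
    have heq : cfc (fun x : ℝ => 1 - fm x) X = 1 - cfc fm X := by
      rw [cfc_sub _ _ X (contOn _ X) (contOn _ X), cfc_const_one ℝ X hXsa]
    rw [← heq]
    refine posSemidef_cfc hX _ fun x _ => ?_
    by_cases h : x < 0 <;> simp [hfm, h]
  have bPP : (cfc fp X * P).trace.re ≤ P.trace.re := by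
    have h := re_trace_mul_nonneg hfp1_psd hP
    rw [Matrix.sub_mul, Matrix.one_mul, Matrix.trace_sub, Complex.sub_re] at h
    linarith
  have bQQ : (cfc fm X * Q).trace.re ≤ Q.trace.re := by
    have h := re_trace_mul_nonneg hfm1_psd hQ
    rw [Matrix.sub_mul, Matrix.one_mul, Matrix.trace_sub, Complex.sub_re] at h
    linarith
  have bPQ : 0 ≤ (cfc fp X * Q).trace.re := re_trace_mul_nonneg hfp_psd hQ
  have bQP : 0 ≤ (cfc fm X * P).trace.re := re_trace_mul_nonneg hfm_psd hP
  have expand : (cfc (fun x : ℝ => |x|) X).trace.re =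
      ((cfc fp X * P).trace.re - (cfc fp X * Q).trace.re)
        - ((cfc fm X * P).trace.re - (cfc fm X * Q).trace.re) := by
    rw [habs, hXPQ]
    simp only [Matrix.mul_sub, Matrix.trace_sub, Complex.sub_re]
  linarith
private lemma re_trace_mul_le_holder {A B : Matrix n n ℂ} (hA : A.PosSemidef) (hB : B.PosSemidef)
    {p q : ℝ} (hpq : p.HolderConjugate q) :
    (A * B).trace.re ≤ ((cfc (fun x : ℝ => x ^ p) A).trace.re) ^ (1/p) *
      ((cfc (fun x : ℝ => x ^ q) B).trace.re) ^ (1/q) := by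
  have hA1 := hA.1
  have hB1 := hB.1
  set U : Matrix n n ℂ := (hA1.eigenvectorUnitary : Matrix n n ℂ) with hU
  set V : Matrix n n ℂ := (hB1.eigenvectorUnitary : Matrix n n ℂ) with hV
  set a : n → ℝ := hA1.eigenvalues with ha
  set b : n → ℝ := hB1.eigenvalues with hb
  set W : Matrix n n ℂ := star U * V with hW
  set w : n → n → ℝ := fun i j => Complex.normSq (W i j) with hw
  set Da : Matrix n n ℂ := Matrix.diagonal (RCLike.ofReal ∘ a) with hDa
  set Db : Matrix n n ℂ := Matrix.diagonal (RCLike.ofReal ∘ b) with hDb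
  have hUU : star U * U = 1 := Unitary.star_mul_self_of_mem (SetLike.coe_mem _)
  have hVV : V * star V = 1 := Unitary.mul_star_self_of_mem (SetLike.coe_mem _)
  have hVV' : star V * V = 1 := Unitary.star_mul_self_of_mem (SetLike.coe_mem _)
  have hUU' : U * star U = 1 := Unitary.mul_star_self_of_mem (SetLike.coe_mem _)
  have hWW : W * star W = 1 := by
    rw [hW, Matrix.star_mul, star_star, Matrix.mul_assoc, ← Matrix.mul_assoc V, hVV,
      Matrix.one_mul, hUU]
  have hWW' : star W * W = 1 := by
    rw [hW, Matrix.star_mul, star_star, Matrix.mul_assoc, ← Matrix.mul_assoc U, hUU',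
      Matrix.one_mul, hVV']
  have hAeq : A = U * Da * star U := hA1.spectral_theorem
  have hBeq : B = V * Db * star V := hB1.spectral_theorem
  have hAB : (A * B).trace = (Da * W * Db * star W).trace := by
    conv_lhs => rw [hAeq, hBeq]
    simp only [Matrix.mul_assoc]
    rw [Matrix.trace_mul_comm]
    simp only [hW, Matrix.star_mul, star_star, Matrix.mul_assoc]
  have hterm : ∀ (z : ℂ) (x y : ℝ), (x : ℂ) * (z * ((y : ℂ) * star z))
      = ((x * y * Complex.normSq z : ℝ) : ℂ) := by
    intro z x y
    have : (x : ℂ) * (z * ((y : ℂ) * star z)) = (x : ℂ) * (y : ℂ) * (z * star z) := by ring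
    rw [this, Complex.star_def, Complex.mul_conj]
    push_cast
    ring
  have hentry : (Da * W * Db * star W).trace = ∑ i, ∑ j, ((a i * b j * w i j : ℝ) : ℂ) := by
    rw [Matrix.trace]
    rw [Finset.sum_congr rfl (fun i _ => ?_)]
    have : (Da * W * Db * star W).diag i = ∑ j, ((a i * b j * w i j : ℝ) : ℂ) := by
      rw [Matrix.diag_apply, Matrix.mul_apply]
      refine Finset.sum_congr rfl fun j _ => ?_
      rw [Matrix.mul_diagonal, Matrix.diagonal_mul, Matrix.star_apply]
      have hca : ((RCLike.ofReal ∘ a) i : ℂ) = ((a i : ℝ) : ℂ) := rfl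
      have hcb : ((RCLike.ofReal ∘ b) j : ℂ) = ((b j : ℝ) : ℂ) := rfl
      rw [hca, hcb, ← hterm (W i j) (a i) (b j)]
      ring
    rw [this]
  have hre : (A * B).trace.re = ∑ i, ∑ j, a i * b j * w i j := by
    rw [hAB, hentry]
    simp [Complex.re_sum]
  have hrow : ∀ i, ∑ j, w i j = 1 := by
    intro i
    have h1 : (W * star W) i i = 1 := by rw [hWW]; simp [Matrix.one_apply]
    have h2 : (W * star W) i i = ∑ j, ((w i j : ℝ) : ℂ) := by
      simp only [Matrix.mul_apply, Matrix.star_apply]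
      exact Finset.sum_congr rfl fun j _ => by
        rw [Complex.star_def, Complex.mul_conj]
    have := h2 ▸ h1
    have := congrArg Complex.re this
    simpa [Complex.re_sum] using this
  have hcol : ∀ j, ∑ i, w i j = 1 := by
    intro j
    have h1 : (star W * W) j j = 1 := by rw [hWW']; simp [Matrix.one_apply]
    have h2 : (star W * W) j j = ∑ i, ((w i j : ℝ) : ℂ) := by
      simp only [Matrix.mul_apply, Matrix.star_apply]
      exact Finset.sum_congr rfl fun i _ => by
        rw [Complex.star_def, mul_comm, Complex.mul_conj]
    have := h2 ▸ h1
    have := congrArg Complex.re this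
    simpa [Complex.re_sum] using this
  have han : ∀ i, 0 ≤ a i := fun i => hA.eigenvalues_nonneg i
  have hbn : ∀ j, 0 ≤ b j := fun j => hB.eigenvalues_nonneg j
  have hwn : ∀ i j, 0 ≤ w i j := fun i j => Complex.normSq_nonneg _
  have hsum1 : 1/p + 1/q = 1 := by
    simpa [one_div] using hpq.inv_add_inv_eq_one
  have hH := Real.inner_le_Lp_mul_Lq (Finset.univ : Finset (n × n))
    (fun ij => (w ij.1 ij.2) ^ (1/p) * a ij.1)
    (fun ij => (w ij.1 ij.2) ^ (1/q) * b ij.2) hpq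
  have hL : ∑ ij : n × n, ((w ij.1 ij.2) ^ (1/p) * a ij.1) * ((w ij.1 ij.2) ^ (1/q) * b ij.2)
      = ∑ i, ∑ j, a i * b j * w i j := by
    rw [Fintype.sum_prod_type]
    refine Finset.sum_congr rfl fun i _ => Finset.sum_congr rfl fun j _ => ?_
    have : (w i j) ^ (1/p) * (w i j) ^ (1/q) = w i j := by
      rw [← Real.rpow_add' (hwn i j) (by rw [hsum1]; norm_num), hsum1, Real.rpow_one]
    calc (w i j) ^ (1/p) * a i * ((w i j) ^ (1/q) * b j)
        = ((w i j) ^ (1/p) * (w i j) ^ (1/q)) * (a i * b j) := by ring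
      _ = a i * b j * w i j := by rw [this]; ring
  have hsp : ∑ ij : n × n, |(w ij.1 ij.2) ^ (1/p) * a ij.1| ^ p = ∑ i, a i ^ p := by
    rw [Fintype.sum_prod_type]
    refine Finset.sum_congr rfl fun i _ => ?_
    have hcongr : ∀ j, |(w i j) ^ (1/p) * a i| ^ p = w i j * a i ^ p := by
      intro j
      rw [abs_of_nonneg (mul_nonneg (Real.rpow_nonneg (hwn i j) _) (han i)),
        Real.mul_rpow (Real.rpow_nonneg (hwn i j) _) (han i),
        ← Real.rpow_mul (hwn i j), one_div, inv_mul_cancel₀ hpq.pos.ne', Real.rpow_one]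
    rw [Finset.sum_congr rfl fun j _ => hcongr j, ← Finset.sum_mul, hrow i, one_mul]
  have hsq : ∑ ij : n × n, |(w ij.1 ij.2) ^ (1/q) * b ij.2| ^ q = ∑ j, b j ^ q := by
    rw [Fintype.sum_prod_type_right]
    refine Finset.sum_congr rfl fun j _ => ?_
    have hcongr : ∀ i, |(w i j) ^ (1/q) * b j| ^ q = w i j * b j ^ q := by
      intro i
      rw [abs_of_nonneg (mul_nonneg (Real.rpow_nonneg (hwn i j) _) (hbn j)),
        Real.mul_rpow (Real.rpow_nonneg (hwn i j) _) (hbn j),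
        ← Real.rpow_mul (hwn i j), one_div, inv_mul_cancel₀ hpq.symm.pos.ne', Real.rpow_one]
    rw [Finset.sum_congr rfl fun i _ => hcongr i, ← Finset.sum_mul, hcol j, one_mul]
  have htrp : (cfc (fun x : ℝ => x ^ p) A).trace.re = ∑ i, a i ^ p := by
    rw [trace_cfc' hA1]
    simp [Complex.re_sum, ha]
  have htrq : (cfc (fun x : ℝ => x ^ q) B).trace.re = ∑ j, b j ^ q := by
    rw [trace_cfc' hB1]
    simp [Complex.re_sum, hb]
  rw [hre, htrp, htrq, ← hsp, ← hsq, ← hL]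
  exact hH
private lemma spectrum_pos_of_posDef {σ : Matrix n n ℂ} (hσ : σ.PosDef) :
    ∀ x ∈ spectrum ℝ σ, 0 < x := by
  intro x hx
  obtain ⟨i, rfl⟩ := hσ.1.spectrum_real_eq_range_eigenvalues ▸ hx
  exact hσ.eigenvalues_pos i

private lemma mpow_add {σ : Matrix n n ℂ} (hσ : σ.PosDef) (r s : ℝ) :
    mpow σ r * mpow σ s = mpow σ (r + s) := by
  unfold mpow
  rw [← cfc_mul _ _ σ (contOn _ σ) (contOn _ σ)]
  exact cfc_congr fun x hx => (Real.rpow_add (spectrum_pos_of_posDef hσ x hx) r s).symm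

private lemma mpow_zero {σ : Matrix n n ℂ} (hσ : σ.IsHermitian) : mpow σ 0 = 1 := by
  unfold mpow
  have : cfc (fun x : ℝ => x ^ (0:ℝ)) σ = cfc (fun _ : ℝ => (1:ℝ)) σ :=
    cfc_congr fun x _ => Real.rpow_zero x
  rw [this]
  exact cfc_const_one ℝ σ hσ

private lemma mpow_one_eq {σ : Matrix n n ℂ} (hσ : σ.IsHermitian) : mpow σ 1 = σ := by
  unfold mpow
  have : cfc (fun x : ℝ => x ^ (1:ℝ)) σ = cfc (fun x : ℝ => x) σ :=
    cfc_congr fun x _ => Real.rpow_one x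
  rw [this]
  exact cfc_id' ℝ σ hσ

private lemma mpow_posSemidef {σ : Matrix n n ℂ} (hσ : σ.PosDef) (r : ℝ) :
    (mpow σ r).PosSemidef :=
  posSemidef_cfc hσ.1 _ fun x hx => Real.rpow_nonneg (spectrum_pos_of_posDef hσ x hx).le r

private lemma cfc_rpow_mpow {σ : Matrix n n ℂ} (hσ : σ.PosDef) (s r : ℝ) :
    cfc (fun x : ℝ => x ^ r) (mpow σ s) = mpow σ (s * r) := by
  unfold mpow
  have hcomp := cfc_comp' (fun x : ℝ => x ^ r) (fun x : ℝ => x ^ s) σ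
    (contOn_img _ σ _) (contOn _ σ) hσ.1
  refine hcomp.symm.trans ?_
  exact cfc_congr fun x hx =>
    (Real.rpow_mul (spectrum_pos_of_posDef hσ x hx).le s r).symm

private lemma schattenNorm_eq_cfc_abs {Y : Matrix n n ℂ} (hY : Y.IsHermitian) (p : ℝ) :
    schattenNorm p Y = ((cfc (fun x : ℝ => |x| ^ p) Y).trace.re) ^ (1/p) := by
  have hYsa : IsSelfAdjoint Y := hY
  unfold schattenNorm mpow
  have h1 : Yᴴ * Y = cfc (fun x : ℝ => x * x) Y := by
    rw [cfc_mul _ _ Y (contOn _ Y) (contOn _ Y), cfc_id' ℝ Y hYsa, hY.eq]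
  have h2 : cfc (fun x : ℝ => x ^ (p/2)) (Yᴴ * Y) = cfc (fun x : ℝ => |x| ^ p) Y := by
    rw [h1]
    have hcomp := cfc_comp' (fun x : ℝ => x ^ (p/2)) (fun x : ℝ => x * x) Y
      (contOn_img _ Y _) (contOn _ Y) hYsa
    refine hcomp.symm.trans ?_
    refine cfc_congr fun x _ => ?_
    show (x * x) ^ (p/2) = |x| ^ p
    have hxx : x * x = |x| ^ (2:ℝ) := by
      rw [show ((2:ℝ) = ((2:ℕ):ℝ)) from by norm_num, Real.rpow_natCast]
      rw [sq_abs, sq]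
    rw [hxx, ← Real.rpow_mul (abs_nonneg x)]
    congr 1
    ring
  rw [h2]
/-- `‖X‖₁ ≤ μ_α(X‖σ) · (Tr σ)^{(α-1)/α}` for Hermitian `X` and positive definite `σ`. -/
theorem traceNorm_le_muAlpha_mul_trace_rpow {d : ℕ}
    (X σ : Matrix (Fin d) (Fin d) ℂ) (hX : X.IsHermitian) (hX0 : X ≠ 0)
    (hσ : σ.PosDef) (α : ℝ) (hα : 1 ≤ α) :
    schattenNorm 1 X ≤ muAlpha α X σ * σ.trace.re ^ ((α - 1) / α) := by
  rcases eq_or_lt_of_le hα with rfl | hα1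
  · unfold muAlpha
    rw [show (1 - (1:ℝ)) / (2 * 1) = 0 by norm_num, mpow_zero hσ.1, Matrix.one_mul,
      Matrix.mul_one, show ((1:ℝ) - 1) / 1 = 0 by norm_num, Real.rpow_zero, mul_one]
  · have hα0 : (0:ℝ) < α := by linarith
    have hαm1 : (0:ℝ) < α - 1 := by linarith
    set c : ℝ := (1 - α) / (2 * α) with hc
    set T : Matrix (Fin d) (Fin d) ℂ := mpow σ c with hT
    set S : Matrix (Fin d) (Fin d) ℂ := mpow σ (-c) with hS
    set Y : Matrix (Fin d) (Fin d) ℂ := T * X * T with hY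
    have hTS : T * S = 1 := by
      rw [hT, hS, mpow_add hσ, add_neg_cancel]
      exact mpow_zero hσ.1
    have hST : S * T = 1 := by
      rw [hS, hT, mpow_add hσ, neg_add_cancel]
      exact mpow_zero hσ.1
    have hXeq : X = S * Y * S := by
      rw [hY]
      calc X = 1 * X * 1 := by rw [Matrix.one_mul, Matrix.mul_one]
        _ = (S * T) * X * (T * S) := by rw [hST, hTS]
        _ = S * (T * X * T) * S := by simp only [Matrix.mul_assoc]
    have hT_herm : T.IsHermitian := (mpow_posSemidef hσ c).1
    have hS_herm : S.IsHermitian := (mpow_posSemidef hσ (-c)).1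
    have hY_herm : Y.IsHermitian := by
      rw [hY, Matrix.IsHermitian, Matrix.conjTranspose_mul, Matrix.conjTranspose_mul,
        hT_herm.eq, hX.eq]
      exact (Matrix.mul_assoc T X T).symm
    have hYsa : IsSelfAdjoint Y := hY_herm
    set Yp := cfc (fun x : ℝ => max x 0) Y with hYp
    set Ym := cfc (fun x : ℝ => max (-x) 0) Y with hYm
    have hYsub : Y = Yp - Ym := by
      rw [hYp, hYm, ← cfc_sub _ _ Y (contOn _ Y) (contOn _ Y)]
      conv_lhs => rw [← cfc_id' ℝ Y hYsa]
      refine cfc_congr fun x _ => ?_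
      rcases le_total 0 x with h | h
      · rw [max_eq_left h, max_eq_right (by linarith : -x ≤ 0), sub_zero]
      · rw [max_eq_right h, max_eq_left (by linarith : (0:ℝ) ≤ -x)]
        ring
    have hYadd : cfc (fun x : ℝ => |x|) Y = Yp + Ym := by
      rw [hYp, hYm, ← cfc_add (a := Y) (f := fun x : ℝ => max x 0) (g := fun x : ℝ => max (-x) 0)
        (contOn _ Y) (contOn _ Y)]
      refine cfc_congr fun x _ => ?_
      rcases le_total 0 x with h | h
      · rw [abs_of_nonneg h, max_eq_left h, max_eq_right (by linarith : -x ≤ 0), add_zero]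
      · rw [abs_of_nonpos h, max_eq_right h, max_eq_left (by linarith : (0:ℝ) ≤ -x), zero_add]
    have hYp_psd : Yp.PosSemidef := posSemidef_cfc hY_herm _ fun x _ => le_max_right _ _
    have hYm_psd : Ym.PosSemidef := posSemidef_cfc hY_herm _ fun x _ => le_max_right _ _
    set P := S * Yp * S with hPd
    set Q := S * Ym * S with hQd
    have hP_psd : P.PosSemidef := by
      have h := hYp_psd.conjTranspose_mul_mul_same S
      rwa [hS_herm.eq] at h
    have hQ_psd : Q.PosSemidef := by
      have h := hYm_psd.conjTranspose_mul_mul_same S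
      rwa [hS_herm.eq] at h
    have hXPQ : X = P - Q := by
      rw [hXeq, hYsub, hPd, hQd]
      rw [Matrix.mul_sub, Matrix.sub_mul]
    have h1 : schattenNorm 1 X = (cfc (fun x : ℝ => |x|) X).trace.re := by
      rw [schattenNorm_eq_cfc_abs hX 1,
        show (fun x : ℝ => |x| ^ (1:ℝ)) = fun x : ℝ => |x| from funext fun x => Real.rpow_one _,
        show (1:ℝ)/1 = 1 by norm_num, Real.rpow_one]
    have h2 : (cfc (fun x : ℝ => |x|) X).trace.re ≤ P.trace.re + Q.trace.re :=
      re_trace_abs_le hX hP_psd hQ_psd hXPQ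
    set M := cfc (fun x : ℝ => |x|) Y with hM
    have hM_psd : M.PosSemidef := posSemidef_cfc hY_herm _ fun x _ => abs_nonneg x
    have hSS : S * S = mpow σ ((α-1)/α) := by
      rw [hS, mpow_add hσ]
      rw [show -c + -c = (α-1)/α by rw [hc]; field_simp; ring]
    have h3 : P.trace.re + Q.trace.re = (mpow σ ((α-1)/α) * M).trace.re := by
      have hPQ : P + Q = S * M * S := by
        rw [hPd, hQd, hYadd, Matrix.mul_add, Matrix.add_mul]
      have htr : (P + Q).trace = (mpow σ ((α-1)/α) * M).trace := by
        rw [hPQ, Matrix.trace_mul_comm, ← Matrix.mul_assoc, hSS]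
      have := congrArg Complex.re htr
      rwa [Matrix.trace_add, Complex.add_re] at this
    have hpq : (α/(α-1)).HolderConjugate α := by
      rw [Real.holderConjugate_iff]
      constructor
      · exact (one_lt_div hαm1).mpr (by linarith)
      · field_simp
        ring
    have h4 := re_trace_mul_le_holder (mpow_posSemidef hσ ((α-1)/α)) hM_psd hpq
    have hid1 : cfc (fun x : ℝ => x ^ (α/(α-1))) (mpow σ ((α-1)/α)) = σ := by
      rw [cfc_rpow_mpow hσ, show (α-1)/α * (α/(α-1)) = 1 by field_simp, mpow_one_eq hσ.1]
    have hid2 : cfc (fun x : ℝ => x ^ α) M = cfc (fun x : ℝ => |x| ^ α) Y := by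
      rw [hM]
      exact (cfc_comp' (fun x : ℝ => x ^ α) (fun x : ℝ => |x|) Y
        (contOn_img _ Y _) (contOn _ Y) hYsa).symm
    have h5 : muAlpha α X σ = ((cfc (fun x : ℝ => |x| ^ α) Y).trace.re) ^ (1/α) := by
      unfold muAlpha
      rw [show mpow σ ((1 - α) / (2 * α)) = T by rw [hT]]
      rw [← hY, schattenNorm_eq_cfc_abs hY_herm α]
    rw [h1, h5]
    calc (cfc (fun x : ℝ => |x|) X).trace.re
        ≤ P.trace.re + Q.trace.re := h2
      _ = (mpow σ ((α-1)/α) * M).trace.re := h3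
      _ ≤ (σ.trace.re) ^ (1/(α/(α-1))) * ((cfc (fun x : ℝ => |x| ^ α) Y).trace.re) ^ (1/α) := by
          rw [hid1, hid2] at h4
          exact h4
      _ = ((cfc (fun x : ℝ => |x| ^ α) Y).trace.re) ^ (1/α) * σ.trace.re ^ ((α - 1) / α) := by
          rw [one_div_div]
          ring
end
end

section
/- For a Hermitian matrix X and a positive definite matrix σ, the operator norm ‖σ^{-1/2} X σ^{-1/2}‖_∞ equals the infimum of all λ ≥ 0 such that -λσ ≤ X ≤ λσ in the Loewner order. -/
open scoped Classical
open Matrix ComplexOrder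

noncomputable section

variable {n : Type*} [Fintype n] [DecidableEq n]

/-- Operator norm (Schatten `∞`-norm) of a matrix. -/
noncomputable def opNorm (Y : Matrix n n ℂ) : ℝ :=
  ‖Matrix.toEuclideanCLM (𝕜 := ℂ) Y‖

lemma aux_contOn (A : Matrix n n ℂ) (f : ℝ → ℝ) : ContinuousOn f (spectrum ℝ A) := by
  rw [continuousOn_iff_continuous_restrict]
  exact continuous_of_discreteTopology

lemma aux_isSelfAdjoint_toEuclideanCLM_iff (A : Matrix n n ℂ) :
    IsSelfAdjoint (toEuclideanCLM (𝕜 := ℂ) A) ↔ A.IsHermitian := by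
  rw [_root_.IsSelfAdjoint, ← map_star, EmbeddingLike.apply_eq_iff_eq _]
  exact ⟨fun h => h, fun h => h⟩

lemma aux_inner (A : Matrix n n ℂ) (x : EuclideanSpace ℂ n) :
    inner (𝕜 := ℂ) ((toEuclideanCLM (𝕜 := ℂ) A) x) x =
      star ((star (WithLp.equiv 2 _ x)) ⬝ᵥ (A *ᵥ (WithLp.equiv 2 _ x))) := by
  rw [EuclideanSpace.inner_eq_star_dotProduct, Matrix.star_dotProduct]
  rw [Matrix.ofLp_toEuclideanCLM, star_star, dotProduct_comm]
  rfl

lemma aux_posSemidef_iff (A : Matrix n n ℂ) :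
    A.PosSemidef ↔ 0 ≤ toEuclideanCLM (𝕜 := ℂ) A := by
  rw [ContinuousLinearMap.nonneg_iff_isPositive, ContinuousLinearMap.isPositive_def',
    Matrix.posSemidef_iff_dotProduct_mulVec]
  constructor
  · intro hA
    refine ⟨(aux_isSelfAdjoint_toEuclideanCLM_iff A).mpr hA.1, fun x => ?_⟩
    have h := hA.2 (WithLp.equiv 2 _ x)
    rw [Complex.le_def] at h
    rw [ContinuousLinearMap.reApplyInnerSelf, aux_inner]
    simpa [RCLike.star_def] using h.1
  · rintro ⟨h1, h2⟩
    have hHerm : A.IsHermitian := (aux_isSelfAdjoint_toEuclideanCLM_iff A).mp h1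
    refine ⟨hHerm, fun v => ?_⟩
    set z := star v ⬝ᵥ (A *ᵥ v) with hz
    have hstar : star z = z := by
      rw [hz, ← Matrix.star_dotProduct, Matrix.star_mulVec, Matrix.dotProduct_mulVec,
        hHerm.eq]
    have him : z.im = 0 := by
      rw [← Complex.conj_eq_iff_im]
      exact hstar
    have hre : 0 ≤ z.re := by
      have h3 := h2 ((WithLp.equiv 2 _).symm v)
      rw [ContinuousLinearMap.reApplyInnerSelf, aux_inner] at h3
      simpa [RCLike.star_def, hz] using h3
    rw [Complex.le_def]
    exact ⟨by simpa using hre, by simp [him]⟩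

lemma aux_mpow_isHermitian (A : Matrix n n ℂ) (r : ℝ) : (mpow A r).IsHermitian :=
  (cfc_predicate (fun x : ℝ => x ^ r) A : IsSelfAdjoint _)

lemma aux_spectrum_pos {A : Matrix n n ℂ} (hA : A.PosDef) : ∀ x ∈ spectrum ℝ A, 0 < x := by
  intro x hx
  rw [hA.1.spectrum_real_eq_range_eigenvalues] at hx
  obtain ⟨i, rfl⟩ := hx
  exact hA.eigenvalues_pos i

lemma aux_mpow_add {A : Matrix n n ℂ} (hpos : ∀ x ∈ spectrum ℝ A, 0 < x) (r s : ℝ) :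
    mpow A r * mpow A s = mpow A (r + s) := by
  rw [mpow, mpow, mpow, ← cfc_mul _ _ A (aux_contOn A _) (aux_contOn A _)]
  exact cfc_congr fun x hx => (Real.rpow_add (hpos x hx) r s).symm

lemma aux_mpow_zero {A : Matrix n n ℂ} (hA : A.IsHermitian) : mpow A 0 = 1 := by
  rw [mpow]
  have h : cfc (fun x : ℝ => x ^ (0:ℝ)) A = cfc (1 : ℝ → ℝ) A :=
    cfc_congr fun x _ => Real.rpow_zero x
  rw [h, cfc_one ℝ A]

lemma aux_mpow_one {A : Matrix n n ℂ} (hA : A.IsHermitian) : mpow A 1 = A := by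
  rw [mpow]
  have h : cfc (fun x : ℝ => x ^ (1:ℝ)) A = cfc (id : ℝ → ℝ) A :=
    cfc_congr fun x _ => Real.rpow_one x
  rw [h, cfc_id ℝ A]

lemma aux_psd_conj {A : Matrix n n ℂ} (hA : A.PosSemidef) {B : Matrix n n ℂ}
    (hB : B.IsHermitian) : (B * A * B).PosSemidef := by
  have := hA.mul_mul_conjTranspose_same B
  rwa [hB.eq] at this

lemma aux_real_smul (lam : ℝ) (M : Matrix n n ℂ) : lam • M = (lam : ℂ) • M := by
  ext i j
  simp [Complex.real_smul]

lemma aux_map_real_smul (lam : ℝ) (M : Matrix n n ℂ) :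
    toEuclideanCLM (𝕜 := ℂ) (lam • M) = lam • toEuclideanCLM (𝕜 := ℂ) M := by
  rw [aux_real_smul, _root_.map_smul,
    RCLike.real_smul_eq_coe_smul (K := ℂ) lam (toEuclideanCLM (𝕜 := ℂ) M)]
  rfl

set_option maxHeartbeats 2000000 in
set_option synthInstance.maxHeartbeats 1000000 in
/-- `‖σ^{-1/2} X σ^{-1/2}‖_∞ = inf {λ ≥ 0 : -λσ ≤ X ≤ λσ}` (Loewner order). -/
theorem opNorm_eq_sInf_loewner {d : ℕ}
    (X σ : Matrix (Fin d) (Fin d) ℂ) (hX : X.IsHermitian) (hσ : σ.PosDef) :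
    opNorm (mpow σ (-(1 / 2 : ℝ)) * X * mpow σ (-(1 / 2 : ℝ))) =
      sInf {lam : ℝ | 0 ≤ lam ∧ (X + lam • σ).PosSemidef ∧ (lam • σ - X).PosSemidef} := by
  have hpos := aux_spectrum_pos hσ
  have hσh := hσ.1
  set Rm := mpow σ (-(1 / 2 : ℝ)) with hRmdef
  set Sm := mpow σ (1 / 2 : ℝ) with hSmdef
  have hRh : Rm.IsHermitian := aux_mpow_isHermitian σ _
  have hSh : Sm.IsHermitian := aux_mpow_isHermitian σ _
  have hRS : Rm * Sm = 1 := by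
    rw [hRmdef, hSmdef, aux_mpow_add hpos, show (-(1 / 2 : ℝ) + 1 / 2) = 0 by norm_num]
    exact aux_mpow_zero hσh
  have hSR : Sm * Rm = 1 := by
    rw [hSmdef, hRmdef, aux_mpow_add hpos, show ((1 / 2 : ℝ) + -(1 / 2)) = 0 by norm_num]
    exact aux_mpow_zero hσh
  have hSS : Sm * Sm = σ := by
    rw [hSmdef, aux_mpow_add hpos, show ((1 / 2 : ℝ) + 1 / 2) = 1 by norm_num]
    exact aux_mpow_one hσh
  have hYh : (Rm * X * Rm).IsHermitian := by
    have h := Matrix.isHermitian_conjTranspose_mul_mul Rm hX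
    rwa [hRh.eq] at h
  have hRσR : Rm * σ * Rm = 1 := by
    rw [← hSS, ← mul_assoc Rm Sm Sm, hRS, one_mul, hSR]
  have hSXS : Sm * (Rm * X * Rm) * Sm = X := by
    rw [← mul_assoc Sm (Rm * X) Rm, ← mul_assoc Sm Rm X, hSR, one_mul,
      mul_assoc X Rm Sm, hRS, mul_one]
  have key1 : ∀ lam : ℝ, (X + lam • σ).PosSemidef ↔
      (Rm * X * Rm + lam • (1 : Matrix (Fin d) (Fin d) ℂ)).PosSemidef := by
    intro lam
    constructor
    · intro h
      have h2 := aux_psd_conj h hRh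
      have e : Rm * (X + lam • σ) * Rm
          = Rm * X * Rm + lam • (1 : Matrix (Fin d) (Fin d) ℂ) := by
        rw [Matrix.mul_add, Matrix.add_mul, Matrix.mul_smul, Matrix.smul_mul, hRσR]
      rwa [e] at h2
    · intro h
      have h2 := aux_psd_conj h hSh
      have e : Sm * (Rm * X * Rm + lam • (1 : Matrix (Fin d) (Fin d) ℂ)) * Sm
          = X + lam • σ := by
        rw [Matrix.mul_add, Matrix.add_mul, Matrix.mul_smul, Matrix.smul_mul, mul_one, hSS, hSXS]
      rwa [e] at h2
  have key2 : ∀ lam : ℝ, (lam • σ - X).PosSemidef ↔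
      (lam • (1 : Matrix (Fin d) (Fin d) ℂ) - Rm * X * Rm).PosSemidef := by
    intro lam
    constructor
    · intro h
      have h2 := aux_psd_conj h hRh
      have e : Rm * (lam • σ - X) * Rm
          = lam • (1 : Matrix (Fin d) (Fin d) ℂ) - Rm * X * Rm := by
        rw [Matrix.mul_sub, Matrix.sub_mul, Matrix.mul_smul, Matrix.smul_mul, hRσR]
      rwa [e] at h2
    · intro h
      have h2 := aux_psd_conj h hSh
      have e : Sm * (lam • (1 : Matrix (Fin d) (Fin d) ℂ) - Rm * X * Rm) * Sm
          = lam • σ - X := by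
        rw [Matrix.mul_sub, Matrix.sub_mul, Matrix.mul_smul, Matrix.smul_mul, mul_one, hSS, hSXS]
      rwa [e] at h2
  set T := toEuclideanCLM (𝕜 := ℂ) (Rm * X * Rm) with hTdef
  have hTsa : IsSelfAdjoint T := (aux_isSelfAdjoint_toEuclideanCLM_iff _).mpr hYh
  have bridge1 : ∀ lam : ℝ,
      (Rm * X * Rm + lam • (1 : Matrix (Fin d) (Fin d) ℂ)).PosSemidef ↔ 0 ≤ T + lam • 1 := by
    intro lam
    rw [aux_posSemidef_iff, map_add, aux_map_real_smul, _root_.map_one]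
  have bridge2 : ∀ lam : ℝ,
      (lam • (1 : Matrix (Fin d) (Fin d) ℂ) - Rm * X * Rm).PosSemidef ↔ 0 ≤ lam • 1 - T := by
    intro lam
    rw [aux_posSemidef_iff, map_sub, aux_map_real_smul, _root_.map_one]
  have halg : ∀ lam : ℝ,
      algebraMap ℝ (EuclideanSpace ℂ (Fin d) →L[ℂ] EuclideanSpace ℂ (Fin d)) lam = lam • 1 :=
    fun lam => Algebra.algebraMap_eq_smul_one lam
  have hmem : ‖T‖ ∈ {lam : ℝ | 0 ≤ lam ∧ (X + lam • σ).PosSemidef ∧ (lam • σ - X).PosSemidef} := by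
    refine ⟨norm_nonneg _, ?_, ?_⟩
    · rw [key1, bridge1]
      have h := hTsa.neg_algebraMap_norm_le_self
      rw [halg] at h
      simpa using add_le_add_left h (‖T‖ • (1 : EuclideanSpace ℂ (Fin d) →L[ℂ] EuclideanSpace ℂ (Fin d)))
    · rw [key2, bridge2]
      have h := hTsa.le_algebraMap_norm_self
      rw [halg] at h
      exact sub_nonneg.mpr h
  have hub : ∀ lam ∈ {lam : ℝ | 0 ≤ lam ∧ (X + lam • σ).PosSemidef ∧ (lam • σ - X).PosSemidef},
      ‖T‖ ≤ lam := by
    rintro lam ⟨hlam0, h1, h2⟩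
    have o1 : 0 ≤ T + lam • 1 := (bridge1 lam).mp ((key1 lam).mp h1)
    have o2 : 0 ≤ lam • 1 - T := (bridge2 lam).mp ((key2 lam).mp h2)
    rcases subsingleton_or_nontrivial
      (EuclideanSpace ℂ (Fin d) →L[ℂ] EuclideanSpace ℂ (Fin d)) with hs | hn
    · have hT0 : T = 0 := Subsingleton.elim _ _
      rw [hT0, norm_zero]; exact hlam0
    · have hle : T ≤ algebraMap ℝ _ lam := by rw [halg]; exact sub_nonneg.mp o2
      have hge : algebraMap ℝ _ (-lam) ≤ T := by
        rw [map_neg, halg]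
        simpa using sub_le_sub_right o1 (lam • (1 : EuclideanSpace ℂ (Fin d) →L[ℂ] EuclideanSpace ℂ (Fin d)))
      have s1 := (le_algebraMap_iff_spectrum_le (a := T) hTsa).mp hle
      have s2 := (algebraMap_le_iff_le_spectrum (a := T) hTsa).mp hge
      rcases CStarAlgebra.norm_or_neg_norm_mem_spectrum hTsa with h | h
      · exact s1 _ h
      · have := s2 _ h
        linarith
  rw [show opNorm (Rm * X * Rm) = ‖T‖ from rfl]
  exact le_antisymm (le_csInf ⟨‖T‖, hmem⟩ hub) (csInf_le ⟨0, fun b hb => hb.1⟩ hmem)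

end
end
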